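/- Let (ℓ, ℓ') be a Lagrangian frame in (ℝ^{2n}, σ) and let X_ℓ ⊆ ℓ be a centered ellipsoid carried by ℓ (i.e. X_ℓ = L(B^{2n}(1)) ∩ ℓ for some injective linear map L : ℝⁿ → ℝ^{2n} with range ℓ, equivalently X_ℓ is the image of a Euclidean ball of ℝⁿ under a linear isomorphism onto ℓ). Then there exists a linear symplectic automorphism S of ℝ^{2n} such that the Minkowski sum X_ℓ + (X_ℓ)^ℏ_{ℓ'} equals S(C), where C = {(x, p) ∈ ℝⁿ × ℝⁿ : ‖x‖ ≤ √ℏ and ‖p‖ ≤ √ℏ}. -/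

import Mathlib

open MeasureTheory Real Metric
open scoped RealInnerProductSpace Pointwise

noncomputable section

/-- `ℝⁿ` with its Euclidean structure. -/
abbrev En (n : ℕ) := EuclideanSpace ℝ (Fin n)

/-- The phase space `ℝ²ⁿ = ℝⁿ × ℝⁿ` with its Euclidean structure, the first block of
coordinates being the positions `x` and the second block the momenta `p`. -/
abbrev PS (n : ℕ) := EuclideanSpace ℝ (Fin n ⊕ Fin n)

/-- The standard symplectic matrix `J = [[0, I], [-I, 0]]`. -/
def Jmat (n : ℕ) : Matrix (Fin n ⊕ Fin n) (Fin n ⊕ Fin n) ℝ :=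
  Matrix.fromBlocks 0 1 (-1) 0

/-- The standard symplectic form `σ(z, z') = ⟨Jz, z'⟩`. -/
def symp (n : ℕ) (z z' : PS n) : ℝ := ⟪(Matrix.toEuclideanLin (Jmat n)) z, z'⟫

/-- The quadratic form `z ↦ ⟨Mz, z⟩`. -/
def qf {m : Type*} [Fintype m] [DecidableEq m] (M : Matrix m m ℝ)
    (z : EuclideanSpace ℝ m) : ℝ := ⟪(Matrix.toEuclideanLin M) z, z⟫

/-- The symplectic `ℏ`-polar dual `Ω^{ℏ,σ} = {z' : ∀ z ∈ Ω, σ(z, z') ≤ ℏ}`. -/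
def sympDual (n : ℕ) (ℏ : ℝ) (Ω : Set (PS n)) : Set (PS n) :=
  {z' | ∀ z ∈ Ω, symp n z z' ≤ ℏ}

/-- A linear automorphism of `ℝ²ⁿ` is symplectic if it preserves the symplectic form. -/
def IsSymplectic {n : ℕ} (S : PS n ≃ₗ[ℝ] PS n) : Prop :=
  ∀ z z', symp n (S z) (S z') = symp n z z'

/-- A Lagrangian plane: an `n`-dimensional subspace of `ℝ²ⁿ` on which `σ` vanishes
identically. -/
def IsLagrangian (n : ℕ) (ℓ : Submodule ℝ (PS n)) : Prop :=
  Module.finrank ℝ ℓ = n ∧ ∀ z ∈ ℓ, ∀ z' ∈ ℓ, symp n z z' = 0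

/-- A Lagrangian frame: a pair of transversal Lagrangian planes. -/
def IsLagrangianFrame (n : ℕ) (ℓ ℓ' : Submodule ℝ (PS n)) : Prop :=
  IsLagrangian n ℓ ∧ IsLagrangian n ℓ' ∧ ℓ ⊓ ℓ' = ⊥

/-- The Lagrangian polar dual of `X ⊆ ℓ` with respect to `ℓ'`:
`X^ℏ_{ℓ'} = {z' ∈ ℓ' : ∀ z ∈ X, σ(z, z') ≤ ℏ}`. -/
def lagDual (n : ℕ) (ℏ : ℝ) (ℓ' : Submodule ℝ (PS n)) (X : Set (PS n)) : Set (PS n) :=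
  {z' | z' ∈ ℓ' ∧ ∀ z ∈ X, symp n z z' ≤ ℏ}

/-- The position part of a phase-space point. -/
def xpart (n : ℕ) (z : PS n) : En n := WithLp.toLp 2 (fun i => z (Sum.inl i))

/-- The momentum part of a phase-space point. -/
def ppart (n : ℕ) (z : PS n) : En n := WithLp.toLp 2 (fun i => z (Sum.inr i))

/-- A centered ellipsoid carried by the subspace `ℓ`: the image of a Euclidean ball of
`ℝⁿ` under a linear isomorphism onto `ℓ`. -/
def IsCenteredEllipsoidOn (n : ℕ) (ℓ : Submodule ℝ (PS n)) (X : Set (PS n)) : Prop :=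
  ∃ L : En n →ₗ[ℝ] PS n, ∃ r : ℝ, 0 < r ∧ Function.Injective L ∧
    LinearMap.range L = ℓ ∧ X = ⇑L '' Metric.closedBall (0 : En n) r

lemma symp_eq (n : ℕ) (z z' : PS n) :
    symp n z z' = ⟪ppart n z, xpart n z'⟫ - ⟪xpart n z, ppart n z'⟫ := by
  simp only [symp, Matrix.toEuclideanLin_apply, PiLp.inner_apply, RCLike.inner_apply, conj_trivial,
    ppart, xpart, Jmat]
  rw [Fintype.sum_sum_type]
  simp [Matrix.mulVec, Matrix.fromBlocks, dotProduct, Fintype.sum_sum_type,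
    Matrix.one_apply, Finset.sum_ite_eq, mul_comm, Finset.sum_sub_distrib]
  ring

lemma symp_add_left (n : ℕ) (a b z' : PS n) :
    symp n (a + b) z' = symp n a z' + symp n b z' := by
  simp [symp, map_add, inner_add_left]

lemma symp_smul_left (n : ℕ) (c : ℝ) (a z' : PS n) :
    symp n (c • a) z' = c * symp n a z' := by
  simp only [symp, _root_.map_smul, real_inner_smul_left, RCLike.inner_apply, conj_trivial]

lemma symp_add_right (n : ℕ) (z a b : PS n) :
    symp n z (a + b) = symp n z a + symp n z b := by
  simp [symp, inner_add_right]

lemma symp_smul_right (n : ℕ) (c : ℝ) (z a : PS n) :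
    symp n z (c • a) = c * symp n z a := by
  simp only [symp, real_inner_smul_right]

lemma symp_skew (n : ℕ) (z z' : PS n) : symp n z z' = - symp n z' z := by
  rw [symp_eq, symp_eq]
  rw [real_inner_comm (ppart n z), real_inner_comm (xpart n z)]
  ring

lemma symp_nondeg (n : ℕ) (z' : PS n) (h : ∀ z, symp n z z' = 0) : z' = 0 := by
  set z : PS n := WithLp.toLp 2 fun k => Sum.elim (fun i => -(z' (Sum.inr i))) (fun i => z' (Sum.inl i)) k with hz
  have h1 : ppart n z = xpart n z' := rfl
  have h2 : xpart n z = -(ppart n z') := rfl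
  have := h z
  rw [symp_eq, h1, h2, inner_neg_left, real_inner_self_eq_norm_sq,
    real_inner_self_eq_norm_sq] at this
  have hx : ‖xpart n z'‖ = 0 ∧ ‖ppart n z'‖ = 0 := by
    constructor <;> nlinarith [norm_nonneg (xpart n z'), norm_nonneg (ppart n z'),
      sq_nonneg ‖xpart n z'‖, sq_nonneg ‖ppart n z'‖]
  have hx1 : xpart n z' = 0 := norm_eq_zero.mp hx.1
  have hx2 : ppart n z' = 0 := norm_eq_zero.mp hx.2
  ext k
  cases k with
  | inl i => exact congrArg (fun v : En n => v i) hx1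
  | inr i => exact congrArg (fun v : En n => v i) hx2

/-- The pairing map `z' ↦ (i ↦ σ(L eᵢ, z'))`. -/
def pairL (n : ℕ) (L : En n →ₗ[ℝ] PS n) : PS n →ₗ[ℝ] En n where
  toFun z' := WithLp.toLp 2 fun i => symp n (L (EuclideanSpace.single i 1)) z'
  map_add' a b := by ext i; exact symp_add_right n _ a b
  map_smul' c a := by ext i; exact symp_smul_right n c _ a

lemma symp_sum_left (n : ℕ) {ι : Type*} [DecidableEq ι] (s : Finset ι) (f : ι → PS n) (z' : PS n) :
    symp n (∑ i ∈ s, f i) z' = ∑ i ∈ s, symp n (f i) z' := by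
  induction s using Finset.induction with
  | empty => simp [symp]
  | insert _ _ hnot ih => rw [Finset.sum_insert hnot, Finset.sum_insert hnot, symp_add_left, ih]

lemma symp_L_eq (n : ℕ) (L : En n →ₗ[ℝ] PS n) (u : En n) (z' : PS n) :
    symp n (L u) z' = ⟪u, pairL n L z'⟫ := by
  conv_lhs => rw [← (EuclideanSpace.basisFun (Fin n) ℝ).sum_repr u]
  rw [map_sum]
  simp only [_root_.map_smul]
  rw [symp_sum_left]
  rw [PiLp.inner_apply]
  apply Finset.sum_congr rfl
  intro i _
  rw [symp_smul_left]
  simp [EuclideanSpace.basisFun_repr, EuclideanSpace.basisFun_apply, pairL, mul_comm]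

def xpartL (n : ℕ) : PS n →ₗ[ℝ] En n where
  toFun := xpart n
  map_add' _ _ := rfl
  map_smul' _ _ := by ext; rfl

def ppartL (n : ℕ) : PS n →ₗ[ℝ] En n where
  toFun := ppart n
  map_add' _ _ := rfl
  map_smul' _ _ := by ext; rfl

lemma inner_ball_le_iff (n : ℕ) (r ℏ : ℝ) (hr : 0 < r) (hℏ : 0 < ℏ) (w : En n) :
    (∀ u : En n, ‖u‖ ≤ r → ⟪u, w⟫ ≤ ℏ) ↔ r * ‖w‖ ≤ ℏ := by
  constructor
  · intro h
    rcases eq_or_ne w 0 with rfl | hw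
    · simpa using hℏ.le
    · have hwn : (0:ℝ) < ‖w‖ := norm_pos_iff.mpr hw
      have h1 := h ((r / ‖w‖) • w) ?_
      · rw [real_inner_smul_left, real_inner_self_eq_norm_sq] at h1
        have : r / ‖w‖ * ‖w‖ ^ 2 = r * ‖w‖ := by field_simp
        linarith [this ▸ h1]
      · rw [norm_smul, Real.norm_eq_abs, abs_of_pos (by positivity)]
        rw [div_mul_cancel₀ _ (ne_of_gt hwn)]
  · intro h u hu
    calc ⟪u, w⟫ ≤ ‖u‖ * ‖w‖ := real_inner_le_norm _ _
      _ ≤ r * ‖w‖ := mul_le_mul_of_nonneg_right hu (norm_nonneg _)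
      _ ≤ ℏ := h

/-- for a Lagrangian frame `(ℓ, ℓ')` and a centered ellipsoid `X_ℓ` carried
by `ℓ`, the geometric state `X_ℓ + (X_ℓ)^ℏ_{ℓ'}` (Minkowski sum) is the image by some
linear symplectic automorphism `S` of `C = {(x,p) : ‖x‖ ≤ √ℏ, ‖p‖ ≤ √ℏ}`. -/
theorem stmt17 (n : ℕ) (ℏ : ℝ) (hℏ : 0 < ℏ) (ℓ ℓ' : Submodule ℝ (PS n))
    (hframe : IsLagrangianFrame n ℓ ℓ')
    (Xℓ : Set (PS n)) (hXℓ : IsCenteredEllipsoidOn n ℓ Xℓ) :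
    ∃ S : PS n ≃ₗ[ℝ] PS n, IsSymplectic S ∧
      Xℓ + lagDual n ℏ ℓ' Xℓ =
        ⇑S '' {z : PS n | ‖xpart n z‖ ≤ Real.sqrt ℏ ∧ ‖ppart n z‖ ≤ Real.sqrt ℏ} := by
  obtain ⟨⟨hdimℓ, hlagℓ⟩, ⟨hdimℓ', hlagℓ'⟩, hinf⟩ := hframe
  obtain ⟨L, r, hr, hLinj, hLrange, hXeq⟩ := hXℓ
  have hsℏ : (0:ℝ) < Real.sqrt ℏ := Real.sqrt_pos.mpr hℏ
  have hsne : Real.sqrt ℏ ≠ 0 := ne_of_gt hsℏ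
  have hrne : r ≠ 0 := ne_of_gt hr
  set c : ℝ := r / Real.sqrt ℏ with hc
  set d : ℝ := Real.sqrt ℏ / r with hd
  have hcpos : 0 < c := by positivity
  have hdpos : 0 < d := by positivity
  have hcd : c * d = 1 := by rw [hc, hd]; field_simp
  -- ℓ ⊔ ℓ' = ⊤
  have hsup : ℓ ⊔ ℓ' = ⊤ := by
    apply Submodule.eq_top_of_finrank_eq
    have h1 := Submodule.finrank_sup_add_finrank_inf_eq ℓ ℓ'
    rw [hinf, hdimℓ, hdimℓ', finrank_bot] at h1
    rw [finrank_euclideanSpace]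
    simp only [add_zero] at h1
    simp [h1, Fintype.card_sum]
  -- pairing is injective on ℓ'
  have hpair_inj : ∀ z' ∈ ℓ', pairL n L z' = 0 → z' = 0 := by
    intro z' hz' h0
    apply symp_nondeg n z'
    intro z
    have hz : z ∈ ℓ ⊔ ℓ' := by rw [hsup]; trivial
    obtain ⟨a, ha, b, hb, rfl⟩ := Submodule.mem_sup.mp hz
    rw [symp_add_left]
    have ha' : symp n a z' = 0 := by
      rw [← hLrange] at ha
      obtain ⟨u, rfl⟩ := ha
      rw [symp_L_eq, h0]
      simp
    have hb' : symp n b z' = 0 := hlagℓ' b hb z' hz'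
    rw [ha', hb', add_zero]
  -- the equivalence ψ : En n ≃ₗ ℓ'
  set φ' : ℓ' →ₗ[ℝ] En n := (pairL n L) ∘ₗ ℓ'.subtype with hφ'
  have hφinj : Function.Injective φ' := by
    rw [injective_iff_map_eq_zero]
    intro a ha
    ext1
    exact hpair_inj a a.2 ha
  set ψ0 : ℓ' ≃ₗ[ℝ] En n := LinearMap.linearEquivOfInjective φ' hφinj
    (by rw [hdimℓ', finrank_euclideanSpace_fin]) with hψ0
  set ψ : En n ≃ₗ[ℝ] ℓ' := ψ0.symm with hψdef
  have hψ0app : ∀ x : ℓ', ψ0 x = pairL n L (x : PS n) := fun x =>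
    LinearMap.linearEquivOfInjective_apply _ _ _
  have hψ : ∀ v, pairL n L ((ψ v : ℓ') : PS n) = v := by
    intro v
    have := ψ0.apply_symm_apply v
    rwa [hψ0app] at this
  have hψ' : ∀ z', (h : z' ∈ ℓ') → ((ψ (pairL n L z') : ℓ') : PS n) = z' := by
    intro z' h
    have h2 : ψ0.symm (ψ0 ⟨z', h⟩) = ⟨z', h⟩ := ψ0.symm_apply_apply _
    rw [hψ0app] at h2
    exact congrArg Subtype.val h2
  -- the maps M0, N0
  set M0 : En n →ₗ[ℝ] PS n := c • L with hM0
  set N0 : En n →ₗ[ℝ] PS n := (-d) • (ℓ'.subtype ∘ₗ ψ.toLinearMap) with hN0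
  have hM0app : ∀ u, M0 u = c • L u := fun u => rfl
  have hN0app : ∀ v, N0 v = (-d) • ((ψ v : ℓ') : PS n) := fun v => rfl
  have hM0mem : ∀ u, M0 u ∈ ℓ := by
    intro u
    rw [hM0app]
    exact Submodule.smul_mem _ _ (hLrange ▸ LinearMap.mem_range_self L u)
  have hN0mem : ∀ v, N0 v ∈ ℓ' := by
    intro v
    rw [hN0app]
    exact Submodule.smul_mem _ _ (ψ v).2
  have hMN : ∀ u v, symp n (M0 u) (N0 v) = -⟪u, v⟫ := by
    intro u v
    rw [hM0app, hN0app, symp_smul_left, symp_smul_right, symp_L_eq, hψ]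
    have : c * (-d * ⟪u, v⟫) = (c * d) * (-⟪u, v⟫) := by ring
    rw [this, hcd, one_mul]
  have hMM : ∀ u u', symp n (M0 u) (M0 u') = 0 := fun u u' =>
    hlagℓ _ (hM0mem u) _ (hM0mem u')
  have hNN : ∀ v v', symp n (N0 v) (N0 v') = 0 := fun v v' =>
    hlagℓ' _ (hN0mem v) _ (hN0mem v')
  -- the linear map S
  set Slin : PS n →ₗ[ℝ] PS n := M0 ∘ₗ xpartL n + N0 ∘ₗ ppartL n with hSlin
  have hSapp : ∀ z, Slin z = M0 (xpart n z) + N0 (ppart n z) := fun z => by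
    rw [hSlin]; rfl
  have hSinj : Function.Injective Slin := by
    rw [injective_iff_map_eq_zero]
    intro z hz
    rw [hSapp] at hz
    have hmem : M0 (xpart n z) ∈ ℓ ⊓ ℓ' := by
      refine ⟨hM0mem _, ?_⟩
      have : M0 (xpart n z) = -(N0 (ppart n z)) := by
        rw [eq_neg_iff_add_eq_zero]; exact hz
      rw [this]
      exact Submodule.neg_mem _ (hN0mem _)
    rw [hinf, Submodule.mem_bot] at hmem
    have hN : N0 (ppart n z) = 0 := by
      rw [hmem, zero_add] at hz; exact hz
    have hx0 : xpart n z = 0 := by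
      rw [hM0app, smul_eq_zero] at hmem
      rcases hmem with h | h
      · exact absurd h (ne_of_gt hcpos)
      · exact hLinj (by simp [h])
    have hp0 : ppart n z = 0 := by
      rw [hN0app, smul_eq_zero] at hN
      rcases hN with h | h
      · exact absurd (neg_eq_zero.mp h) (ne_of_gt hdpos)
      · have h1 : ψ (ppart n z) = 0 := Subtype.ext h
        have h2 : ψ (ppart n z) = ψ 0 := by rw [h1, map_zero]
        exact ψ.injective h2
    ext k
    cases k with
    | inl i => exact congrArg (fun v : En n => v i) hx0
    | inr i => exact congrArg (fun v : En n => v i) hp0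
  set S : PS n ≃ₗ[ℝ] PS n :=
    LinearEquiv.ofBijective Slin ⟨hSinj, LinearMap.injective_iff_surjective.mp hSinj⟩ with hSdef
  have hScoe : ∀ z, S z = M0 (xpart n z) + N0 (ppart n z) := fun z => rfl
  refine ⟨S, ?_, ?_⟩
  · -- symplectic
    intro z z'
    have h4 : symp n (N0 (ppart n z)) (M0 (xpart n z')) = ⟪xpart n z', ppart n z⟫ := by
      rw [symp_skew, hMN]; ring
    rw [hScoe z, hScoe z', symp_add_left, symp_add_right, symp_add_right, hMM, hNN, hMN, h4]
    conv_rhs => rw [symp_eq]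
    rw [real_inner_comm (ppart n z)]
    ring
  · -- the set equality
    have hXim : Xℓ = ⇑M0 '' Metric.closedBall 0 (Real.sqrt ℏ) := by
      rw [hXeq]
      ext w
      simp only [Set.mem_image, mem_closedBall_zero_iff]
      constructor
      · rintro ⟨u, hu, rfl⟩
        refine ⟨d • u, ?_, ?_⟩
        · rw [norm_smul, Real.norm_eq_abs, abs_of_pos hdpos]
          calc d * ‖u‖ ≤ d * r := mul_le_mul_of_nonneg_left hu hdpos.le
            _ = Real.sqrt ℏ := by rw [hd]; field_simp
        · rw [_root_.map_smul, hM0app, smul_smul, mul_comm d c, hcd, one_smul]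
      · rintro ⟨v, hv, rfl⟩
        refine ⟨c • v, ?_, ?_⟩
        · rw [norm_smul, Real.norm_eq_abs, abs_of_pos hcpos]
          calc c * ‖v‖ ≤ c * Real.sqrt ℏ := mul_le_mul_of_nonneg_left hv hcpos.le
            _ = r := by rw [hc]; field_simp
        · rw [_root_.map_smul]
          exact (hM0app v).symm
    have hDim : lagDual n ℏ ℓ' Xℓ = ⇑N0 '' Metric.closedBall 0 (Real.sqrt ℏ) := by
      ext z'
      simp only [lagDual, Set.mem_setOf_eq, Set.mem_image, mem_closedBall_zero_iff]
      constructor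
      · rintro ⟨hz', hdual⟩
        have hw : ∀ u : En n, ‖u‖ ≤ r → ⟪u, pairL n L z'⟫ ≤ ℏ := by
          intro u hu
          rw [← symp_L_eq]
          exact hdual (L u) (by
            rw [hXeq]
            exact ⟨u, by rwa [mem_closedBall_zero_iff], rfl⟩)
        have hwn : r * ‖pairL n L z'‖ ≤ ℏ := (inner_ball_le_iff n r ℏ hr hℏ _).mp hw
        refine ⟨(-c) • pairL n L z', ?_, ?_⟩
        · rw [norm_smul, Real.norm_eq_abs, abs_neg, abs_of_pos hcpos]
          have : c * ‖pairL n L z'‖ = (r * ‖pairL n L z'‖) / Real.sqrt ℏ := by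
            rw [hc]; ring
          rw [this]
          calc (r * ‖pairL n L z'‖) / Real.sqrt ℏ ≤ ℏ / Real.sqrt ℏ := by gcongr
            _ = Real.sqrt ℏ := Real.div_sqrt
        · rw [hN0app, _root_.map_smul, Submodule.coe_smul, smul_smul]
          have hone : -d * -c = 1 := by rw [neg_mul_neg, mul_comm]; exact hcd
          rw [hone, one_smul]
          exact hψ' z' hz'
      · rintro ⟨v, hv, rfl⟩
        refine ⟨hN0mem v, ?_⟩
        intro z hz
        rw [hXeq] at hz
        obtain ⟨u, hu, rfl⟩ := hz
        rw [mem_closedBall_zero_iff] at hu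
        rw [symp_L_eq]
        have hpv : pairL n L (N0 v) = (-d) • v := by
          rw [hN0app, _root_.map_smul, hψ]
        calc ⟪u, pairL n L (N0 v)⟫ ≤ ‖u‖ * ‖pairL n L (N0 v)‖ := real_inner_le_norm _ _
          _ = ‖u‖ * (d * ‖v‖) := by
              rw [hpv, norm_smul, Real.norm_eq_abs, abs_neg, abs_of_pos hdpos]
          _ ≤ r * (d * Real.sqrt ℏ) := by
              apply mul_le_mul hu (mul_le_mul_of_nonneg_left hv hdpos.le)
                (by positivity) hr.le
          _ = ℏ := by
              rw [hd]
              field_simp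
              exact Real.sq_sqrt hℏ.le
    rw [hDim, hXim]
    ext w
    constructor
    · intro hw
      rw [Set.mem_add] at hw
      obtain ⟨a, ha, b, hb, rfl⟩ := hw
      obtain ⟨u, hu, rfl⟩ := ha
      obtain ⟨v, hv, rfl⟩ := hb
      rw [mem_closedBall_zero_iff] at hu hv
      set z0 : PS n := WithLp.toLp 2 fun k => Sum.elim u v k with hz0
      have hzx : xpart n z0 = u := rfl
      have hzp : ppart n z0 = v := rfl
      refine ⟨z0, ⟨?_, ?_⟩, ?_⟩
      · rw [hzx]; exact hu
      · rw [hzp]; exact hv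
      · rw [hScoe, hzx, hzp]
    · rintro ⟨z, ⟨hzx, hzp⟩, rfl⟩
      rw [hScoe]
      exact Set.add_mem_add ⟨xpart n z, mem_closedBall_zero_iff.mpr hzx, rfl⟩
        ⟨ppart n z, mem_closedBall_zero_iff.mpr hzp, rfl⟩
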